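/- Let ℓ ≥ 2 and q ≥ 1 be integers, set n = 2ℓ+1, and write n = q·m₀ + s₀ with m₀, s₀ integers, 0 ≤ s₀ ≤ q−1. Set K = m₀²(q−s₀) + (m₀+1)²·s₀ and set c = m₀ if q and m₀ are both odd, c = m₀+1 if q is odd and m₀ is even, and c = 2m₀+1 if q is even. Then the number of roots α ∈ Δ(B_ℓ) with q dividing ht(α) equals (K − c)/2 − ℓ. -/
import Mathlib


noncomputable section

/-- `stdVec ℓ i` is the `i`-th standard basis vector `e_i` of `ℚ^ℓ`. -/
def stdVec (ℓ : ℕ) (i : Fin ℓ) : Fin ℓ → ℚ := Pi.single i 1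

/-- The simple roots of the root system of type `Bₗ`:
`αᵢ = eᵢ − eᵢ₊₁` for `1 ≤ i ≤ ℓ−1` and `α_ℓ = e_ℓ`. -/
def simpleB (ℓ : ℕ) (i : Fin ℓ) : Fin ℓ → ℚ :=
  if h : (i : ℕ) + 1 < ℓ then stdVec ℓ i - stdVec ℓ ⟨(i : ℕ) + 1, h⟩ else stdVec ℓ i

/-- The root system of type `Bₗ`: `{±eᵢ ± eⱼ : i < j} ∪ {±eᵢ}` in `ℚ^ℓ`. -/
def rootsB (ℓ : ℕ) : Set (Fin ℓ → ℚ) :=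
  {v | (∃ i j : Fin ℓ, i < j ∧ (v = stdVec ℓ i + stdVec ℓ j ∨ v = stdVec ℓ i - stdVec ℓ j ∨
          v = -stdVec ℓ i + stdVec ℓ j ∨ v = -stdVec ℓ i - stdVec ℓ j)) ∨
        (∃ i : Fin ℓ, v = stdVec ℓ i ∨ v = -stdVec ℓ i)}

/-- sign indicator -/
def chi (a t : ℤ) : ℤ := if a = t then 1 else if a = -t then -1 else 0

/-- `Evec ℓ u` is `e_i` with `ht = u` for `1 ≤ u ≤ ℓ`, extended oddly. -/
def Evec (ℓ : ℕ) (u : ℤ) : Fin ℓ → ℚ := fun i => (chi u ((ℓ : ℤ) - (i : ℕ)) : ℚ)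

lemma Evec_eq_std {ℓ : ℕ} (i : Fin ℓ) : Evec ℓ ((ℓ : ℤ) - (i : ℕ)) = stdVec ℓ i := by
  funext j
  have hi := i.isLt
  have hj := j.isLt
  simp only [Evec, chi, stdVec, Pi.single_apply]
  have h2 : ¬((ℓ:ℤ) - (i:ℕ) = -((ℓ:ℤ) - (j:ℕ))) := by omega
  by_cases h : j = i
  · subst h
    rw [if_pos rfl, if_pos rfl]
    norm_num
  · have h1 : ¬((ℓ:ℤ) - (i:ℕ) = (ℓ:ℤ) - (j:ℕ)) := by
      intro hh
      exact h (Fin.ext (by omega))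
    rw [if_neg h1, if_neg h2, if_neg h]
    rfl

lemma Evec_neg {ℓ : ℕ} (u : ℤ) : Evec ℓ (-u) = -Evec ℓ u := by
  funext j
  have hj := j.isLt
  simp only [Evec, chi, Pi.neg_apply]
  split_ifs <;> push_cast <;> (try ring) <;> (exfalso; omega)

lemma Evec_zero {ℓ : ℕ} : Evec ℓ 0 = 0 := by
  funext j
  have hj := j.isLt
  simp only [Evec, chi, Pi.zero_apply]
  split_ifs <;> (try norm_num) <;> omega

lemma chi_neg {a t : ℤ} (h : 1 ≤ t) : chi (-a) t = - chi a t := by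
  unfold chi; split_ifs <;> omega

lemma chi_recover {L : ℤ} {a b a' b' : ℤ}
    (hba : b < a) (hab : a + b ≠ 0) (hba' : b' < a') (hab' : a' + b' ≠ 0)
    (ha : -L ≤ a) (ha2 : a ≤ L) (hb : -L ≤ b) (hb2 : b ≤ L)
    (ha' : -L ≤ a') (ha2' : a' ≤ L) (hb' : -L ≤ b') (hb2' : b' ≤ L)
    (H : ∀ t : ℤ, 1 ≤ t → t ≤ L → chi a t + chi b t = chi a' t + chi b' t) :
    a = a' ∧ b = b' := by
  have mem : ∀ x : ℤ, x ≠ 0 → -L ≤ x → x ≤ L →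
      ((x = a ∨ x = b) ↔ (x = a' ∨ x = b')) := by
    intro x hx h1 h2
    obtain ⟨t, ht1, ht2, ht3⟩ : ∃ t : ℤ, 1 ≤ t ∧ t ≤ L ∧ (t = x ∨ t = -x) :=
      ⟨if 0 < x then x else -x, by split_ifs <;> omega, by split_ifs <;> omega,
        by split_ifs <;> omega⟩
    have heq := H t ht1 ht2
    unfold chi at heq
    split_ifs at heq <;> omega
  have D1 : a = 0 ∨ a = a' ∨ a = b' := by
    by_cases h : a = 0
    · exact Or.inl h
    · exact Or.inr ((mem a h ha ha2).mp (Or.inl rfl))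
  have D2 : b = 0 ∨ b = a' ∨ b = b' := by
    by_cases h : b = 0
    · exact Or.inl h
    · exact Or.inr ((mem b h hb hb2).mp (Or.inr rfl))
  have D3 : a' = 0 ∨ a' = a ∨ a' = b := by
    by_cases h : a' = 0
    · exact Or.inl h
    · exact Or.inr ((mem a' h ha' ha2').mpr (Or.inl rfl))
  have D4 : b' = 0 ∨ b' = a ∨ b' = b := by
    by_cases h : b' = 0
    · exact Or.inl h
    · exact Or.inr ((mem b' h hb' hb2').mpr (Or.inr rfl))
  omega

lemma ht_std {ℓ : ℕ} (ht : (Fin ℓ → ℚ) →ₗ[ℚ] ℚ) (hht : ∀ i : Fin ℓ, ht (simpleB ℓ i) = 1)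
    (i : Fin ℓ) : ht (stdVec ℓ i) = (ℓ : ℚ) - ((i : ℕ) : ℚ) := by
  have hℓ : 0 < ℓ := i.pos
  have key : ∀ k, k < ℓ → ht (stdVec ℓ ⟨ℓ - 1 - k, by omega⟩) = (k : ℚ) + 1 := by
    intro k
    induction k with
    | zero =>
      intro hk
      have h := hht ⟨ℓ - 1, by omega⟩
      simp only [simpleB] at h
      rw [dif_neg (by simp; omega)] at h
      have he : (⟨ℓ - 1 - 0, by omega⟩ : Fin ℓ) = ⟨ℓ - 1, by omega⟩ := Fin.ext (by simp)
      rw [he]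
      simpa using h
    | succ k IH =>
      intro hk
      have h := hht ⟨ℓ - 1 - (k + 1), by omega⟩
      simp only [simpleB] at h
      rw [dif_pos (by show ℓ - 1 - (k + 1) + 1 < ℓ; omega)] at h
      rw [map_sub] at h
      have he : (⟨(((⟨ℓ - 1 - (k + 1), by omega⟩ : Fin ℓ) : ℕ)) + 1, by simp; omega⟩ : Fin ℓ)
          = ⟨ℓ - 1 - k, by omega⟩ := Fin.ext (by simp; omega)
      rw [he, IH (by omega)] at h
      push_cast
      linarith [h]
  have hi := i.isLt
  have := key (ℓ - 1 - (i : ℕ)) (by omega)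
  have he : (⟨ℓ - 1 - (ℓ - 1 - (i : ℕ)), by omega⟩ : Fin ℓ) = i := Fin.ext (by simp; omega)
  rw [he] at this
  rw [this]
  have hc : ((ℓ - 1 - (i : ℕ) : ℕ) : ℚ) = (ℓ : ℚ) - 1 - ((i : ℕ) : ℚ) := by
    have h1 : (i : ℕ) ≤ ℓ - 1 := by omega
    push_cast [Nat.cast_sub h1, Nat.cast_sub (by omega : 1 ≤ ℓ)]
    ring
  rw [hc]
  ring

lemma ht_Evec {ℓ : ℕ} (ht : (Fin ℓ → ℚ) →ₗ[ℚ] ℚ) (hht : ∀ i : Fin ℓ, ht (simpleB ℓ i) = 1)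
    {u : ℤ} (h1 : -(ℓ : ℤ) ≤ u) (h2 : u ≤ (ℓ : ℤ)) : ht (Evec ℓ u) = (u : ℚ) := by
  have pos : ∀ v : ℤ, 0 < v → v ≤ (ℓ : ℤ) → ht (Evec ℓ v) = (v : ℚ) := by
    intro v hv1 hv2
    have hidx : ℓ - v.toNat < ℓ := by omega
    have he : ((ℓ : ℤ) - (((⟨ℓ - v.toNat, hidx⟩ : Fin ℓ) : ℕ) : ℤ)) = v := by
      show ((ℓ : ℤ) - ((ℓ - v.toNat : ℕ) : ℤ)) = v
      omega
    have h3 := Evec_eq_std (ℓ := ℓ) ⟨ℓ - v.toNat, hidx⟩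
    rw [he] at h3
    rw [h3, ht_std ht hht]
    show (ℓ : ℚ) - ((ℓ - v.toNat : ℕ) : ℚ) = (v : ℚ)
    have hv3 : ((v.toNat : ℕ) : ℚ) = (v : ℚ) := by
      have h4 : ((v.toNat : ℕ) : ℤ) = v := Int.toNat_of_nonneg (by omega)
      exact_mod_cast congrArg (fun z : ℤ => (z : ℚ)) h4
    rw [Nat.cast_sub (by omega : v.toNat ≤ ℓ), hv3]
    ring
  rcases lt_trichotomy u 0 with h | h | h
  · rw [show u = -(-u) by ring, Evec_neg, map_neg, pos (-u) (by omega) (by omega)]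
    push_cast
    ring
  · rw [h, Evec_zero, map_zero]
    norm_num
  · exact pos u h h2

lemma ediv_of {p : ℤ} (k r : ℤ) (hp : 0 < p) (h0 : 0 ≤ r) (h1 : r < p) :
    (p * k + r) / p = k := by
  rw [show p * k + r = r + p * k by ring, Int.add_mul_ediv_left _ _ (ne_of_gt hp),
    Int.ediv_eq_zero_of_lt h0 h1]
  ring

/-- number of elements of `[a, a+N)` congruent to `r` mod `Q`. -/
lemma card_Ico_filter_dvd {Q : ℤ} (hQ : 0 < Q) (a N r : ℤ) (hN : 0 ≤ N) :
    (((Finset.Ico a (a + N)).filter (fun w => Q ∣ w - r)).card : ℤ)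
      = (N + Q - 1 - (r - a) % Q) / Q := by
  set rr := (r - a) % Q with hrr
  have hrr0 : 0 ≤ rr := Int.emod_nonneg _ (ne_of_gt hQ)
  have hrr1 : rr < Q := Int.emod_lt_of_pos _ hQ
  have hdvd : Q ∣ (r - a) - rr := by
    rw [hrr, Int.emod_def]
    exact ⟨(r - a) / Q, by ring⟩
  set cnt := (N + Q - 1 - rr) / Q with hcnt
  have hcnt0 : 0 ≤ cnt := Int.ediv_nonneg (by omega) (by omega)
  have key : ((Finset.Ico a (a + N)).filter (fun w => Q ∣ w - r)).card
      = (Finset.Ico (0 : ℤ) cnt).card := by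
    apply Finset.card_bij' (fun w _ => (w - a - rr) / Q) (fun t _ => a + rr + Q * t)
    · intro w hw
      simp only [Finset.mem_filter, Finset.mem_Ico] at hw ⊢
      obtain ⟨⟨hw1, hw2⟩, hw3⟩ := hw
      have hd : Q ∣ w - a - rr := by
        have : w - a - rr = (w - r) + ((r - a) - rr) := by ring
        rw [this]
        exact dvd_add hw3 hdvd
      obtain ⟨t, htw⟩ := hd
      have hts : (w - a - rr) / Q = t := by rw [htw, Int.mul_ediv_cancel_left _ (ne_of_gt hQ)]
      rw [hts]
      constructor
      · by_contra hneg
        push_neg at hneg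
        have : Q * t ≤ Q * (-1) := by
          apply mul_le_mul_of_nonneg_left (by omega) (le_of_lt hQ)
        omega
      · have e : (t + 1) * Q = Q * t + Q := by ring
        have h5 : (t + 1) * Q ≤ N + Q - 1 - rr := by linarith [e, htw]
        have h6 := (Int.le_ediv_iff_mul_le hQ).mpr h5
        omega
    · intro t ht
      simp only [Finset.mem_filter, Finset.mem_Ico] at ht ⊢
      obtain ⟨ht0, ht1⟩ := ht
      have hQt : 0 ≤ Q * t := mul_nonneg (le_of_lt hQ) ht0
      have hup : (t + 1) * Q ≤ N + Q - 1 - rr := by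
        rw [hcnt] at ht1
        exact (Int.le_ediv_iff_mul_le hQ).mp ht1
      refine ⟨⟨by omega, by nlinarith⟩, ?_⟩
      have : a + rr + Q * t - r = ((r - a) - rr) * (-1) + Q * t := by ring
      rw [this]
      exact dvd_add (Dvd.dvd.mul_right hdvd _) ⟨t, rfl⟩
    · intro w hw
      simp only [Finset.mem_filter, Finset.mem_Ico] at hw
      have hd : Q ∣ w - a - rr := by
        have : w - a - rr = (w - r) + ((r - a) - rr) := by ring
        rw [this]
        exact dvd_add hw.2 hdvd
      have := Int.ediv_mul_cancel hd
      linarith [this]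
    · intro t _
      rw [show a + rr + Q * t - a - rr = Q * t by ring,
        Int.mul_ediv_cancel_left _ (ne_of_gt hQ)]
  rw [key, Int.card_Ico]
  omega

lemma cnt_eval {Q m₀ s₀ : ℤ} (r : ℤ) (hQ : 0 < Q) (hs0 : 0 ≤ s₀) (hs1 : s₀ ≤ Q - 1)
    (hr0 : 0 ≤ r) (hr1 : r < Q) :
    (Q * m₀ + s₀ + Q - 1 - r) / Q = m₀ + (if r < s₀ then 1 else 0) := by
  split_ifs with h
  · rw [show Q * m₀ + s₀ + Q - 1 - r = Q * (m₀ + 1) + (s₀ - 1 - r) by ring,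
      ediv_of _ _ hQ (by omega) (by omega)]
  · rw [show Q * m₀ + s₀ + Q - 1 - r = Q * m₀ + (s₀ + Q - 1 - r) by ring,
      ediv_of _ _ hQ (by omega) (by omega)]
    ring

/-- number of `u ∈ [-ℓ, ℓ]` with `(u + ℓ) % Q < s₀`. -/
lemma count_small_residues {Q m₀ s₀ : ℤ} (ℓ : ℕ) (hQ : 0 < Q) (hs0 : 0 ≤ s₀)
    (hs1 : s₀ ≤ Q - 1) (hm0 : 0 ≤ m₀) (hdec : (2 * ℓ + 1 : ℤ) = Q * m₀ + s₀) :
    (((Finset.Icc (-(ℓ : ℤ)) ℓ).filter (fun u => (u + ℓ) % Q < s₀)).card : ℤ)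
      = (m₀ + 1) * s₀ := by
  have key : ((Finset.Icc (-(ℓ : ℤ)) ℓ).filter (fun u => (u + ℓ) % Q < s₀)).card
      = ((Finset.Ico (0 : ℤ) (m₀ + 1)) ×ˢ (Finset.Ico (0 : ℤ) s₀)).card := by
    apply Finset.card_bij' (fun u _ => ((u + ℓ) / Q, (u + ℓ) % Q))
      (fun p _ => Q * p.1 + p.2 - ℓ)
    · intro u hu
      simp only [Finset.mem_filter, Finset.mem_Icc] at hu
      obtain ⟨⟨h1, h2⟩, h3⟩ := hu
      have hw0 : 0 ≤ u + ℓ := by omega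
      have hmod0 : 0 ≤ (u + ℓ) % Q := Int.emod_nonneg _ (ne_of_gt hQ)
      have heq := Int.mul_ediv_add_emod (u + ℓ) Q
      simp only [Finset.mem_product, Finset.mem_Ico]
      refine ⟨⟨Int.ediv_nonneg hw0 (le_of_lt hQ), ?_⟩, hmod0, h3⟩
      by_contra hneg
      push_neg at hneg
      have h4 : Q * (m₀ + 1) ≤ Q * ((u + ℓ) / Q) :=
        mul_le_mul_of_nonneg_left hneg (le_of_lt hQ)
      have h5 : (u : ℤ) + ℓ ≤ 2 * ℓ := by omega
      nlinarith
    · intro p hp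
      simp only [Finset.mem_product, Finset.mem_Ico] at hp
      obtain ⟨⟨h1, h2⟩, h3, h4⟩ := hp
      have h5 : Q * p.1 ≤ Q * m₀ := mul_le_mul_of_nonneg_left (by omega) (le_of_lt hQ)
      have h6 : 0 ≤ Q * p.1 := mul_nonneg (le_of_lt hQ) h1
      simp only [Finset.mem_filter, Finset.mem_Icc]
      have hmod : (Q * p.1 + p.2 - ℓ + ℓ) % Q = p.2 := by
        rw [show Q * p.1 + p.2 - ℓ + (ℓ : ℤ) = p.2 + Q * p.1 by ring,
          Int.add_mul_emod_self_left, Int.emod_eq_of_lt h3 (by omega)]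
      refine ⟨⟨by omega, by omega⟩, by rw [hmod]; omega⟩
    · intro u hu
      show Q * ((u + ℓ) / Q) + (u + ℓ) % Q - ℓ = u
      have := Int.mul_ediv_add_emod (u + ℓ) Q
      omega
    · intro p hp
      simp only [Finset.mem_product, Finset.mem_Ico] at hp
      obtain ⟨⟨h1, h2⟩, h3, h4⟩ := hp
      have hmod : (Q * p.1 + p.2 - ℓ + ℓ) % Q = p.2 := by
        rw [show Q * p.1 + p.2 - ℓ + (ℓ : ℤ) = p.2 + Q * p.1 by ring,
          Int.add_mul_emod_self_left, Int.emod_eq_of_lt h3 (by omega)]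
      have hdiv : (Q * p.1 + p.2 - ℓ + ℓ) % Q = p.2 → True := fun _ => trivial
      have : (Q * p.1 + p.2 - ℓ + (ℓ : ℤ)) / Q = p.1 := by
        rw [show Q * p.1 + p.2 - ℓ + (ℓ : ℤ) = Q * p.1 + p.2 by ring,
          ediv_of _ _ hQ h3 (by omega)]
      simp only [Prod.ext_iff]
      exact ⟨this, hmod⟩
  rw [key, Finset.card_product, Int.card_Ico, Int.card_Ico, Nat.cast_mul,
    Int.toNat_of_nonneg (by omega : (0:ℤ) ≤ m₀ + 1 - 0),
    Int.toNat_of_nonneg (by omega : (0:ℤ) ≤ s₀ - 0)]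
  ring

lemma card_multiples {p : ℤ} (hp : 0 < p) (ℓ : ℕ) :
    (((Finset.Icc (-(ℓ : ℤ)) ℓ).filter (fun u => p ∣ u)).card : ℤ)
      = 2 * ((ℓ : ℤ) / p) + 1 := by
  set j := (ℓ : ℤ) / p with hj
  have hj0 : 0 ≤ j := Int.ediv_nonneg (by positivity) (le_of_lt hp)
  have key : ((Finset.Icc (-(ℓ : ℤ)) ℓ).filter (fun u => p ∣ u)).card
      = (Finset.Icc (-j) j).card := by
    apply Finset.card_bij' (fun u _ => u / p) (fun t _ => p * t)
    · intro u hu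
      simp only [Finset.mem_filter, Finset.mem_Icc] at hu ⊢
      obtain ⟨⟨h1, h2⟩, t, htu⟩ := hu
      have hts : u / p = t := by rw [htu, Int.mul_ediv_cancel_left _ (ne_of_gt hp)]
      rw [hts]
      constructor
      · have : (-t) * p ≤ (ℓ : ℤ) := by linarith [htu]
        have := (Int.le_ediv_iff_mul_le hp).mpr this
        omega
      · exact (Int.le_ediv_iff_mul_le hp).mpr (by linarith [htu])
    · intro t ht
      simp only [Finset.mem_filter, Finset.mem_Icc] at ht ⊢
      obtain ⟨h1, h2⟩ := ht
      have hu : t * p ≤ (ℓ : ℤ) := (Int.le_ediv_iff_mul_le hp).mp h2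
      have hl : (-t) * p ≤ (ℓ : ℤ) := (Int.le_ediv_iff_mul_le hp).mp (by omega)
      exact ⟨⟨by linarith, by linarith⟩, ⟨t, rfl⟩⟩
    · intro u hu
      simp only [Finset.mem_filter] at hu
      exact Int.mul_ediv_cancel' hu.2
    · intro t _
      rw [Int.mul_ediv_cancel_left _ (ne_of_gt hp)]
  rw [key, Int.card_Icc]
  omega

lemma T_card_eq {q ℓ : ℕ} (hq : 1 ≤ q) {m₀ s₀ K : ℤ}
    (hdecomp : (2 * ℓ + 1 : ℤ) = (q : ℤ) * m₀ + s₀) (hs0 : 0 ≤ s₀) (hs1 : s₀ ≤ (q : ℤ) - 1)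
    (hK : K = m₀ ^ 2 * ((q : ℤ) - s₀) + (m₀ + 1) ^ 2 * s₀) :
    (((((Finset.Icc (-(ℓ : ℤ)) ℓ) ×ˢ (Finset.Icc (-(ℓ : ℤ)) ℓ)).filter
        (fun p => (q : ℤ) ∣ p.1 - p.2)).card : ℤ)) = K := by
  have hQ : 0 < (q : ℤ) := by exact_mod_cast hq
  have hl0 : (0 : ℤ) ≤ (ℓ : ℤ) := Int.natCast_nonneg ℓ
  have hm0 : 0 ≤ m₀ := by
    by_contra hneg
    push_neg at hneg
    have : (q : ℤ) * m₀ ≤ (q : ℤ) * (-1) :=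
      mul_le_mul_of_nonneg_left (by omega) (le_of_lt hQ)
    linarith
  set Box := Finset.Icc (-(ℓ : ℤ)) (ℓ : ℤ) with hBox
  have step1 : ((Box ×ˢ Box).filter (fun p => (q : ℤ) ∣ p.1 - p.2)).card
      = ∑ u ∈ Box, ((Box.filter (fun v => (q : ℤ) ∣ u - v)).card) := by
    rw [Finset.card_filter, Finset.sum_product]
    exact Finset.sum_congr rfl fun u _ => (Finset.card_filter _ _).symm
  have inner : ∀ u ∈ Box, ((Box.filter (fun v => (q : ℤ) ∣ u - v)).card : ℤ)
      = m₀ + (if (u + ℓ) % q < s₀ then 1 else 0) := by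
    intro u hu
    have e1 : Box.filter (fun v => (q : ℤ) ∣ u - v) = Box.filter (fun v => (q : ℤ) ∣ v - u) := by
      apply Finset.filter_congr
      intro v _
      exact dvd_sub_comm
    have e2 : Box = Finset.Ico (-(ℓ : ℤ)) (-(ℓ : ℤ) + (2 * ℓ + 1)) := by
      ext x
      simp only [hBox, Finset.mem_Icc, Finset.mem_Ico]
      omega
    rw [e1, e2, card_Ico_filter_dvd hQ _ _ _ (by omega)]
    rw [show u - (-(ℓ : ℤ)) = u + ℓ by ring, hdecomp]
    rw [show (q : ℤ) * m₀ + s₀ + q - 1 - (u + ℓ) % q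
        = (q : ℤ) * m₀ + s₀ + (q : ℤ) - 1 - ((u + ℓ) % q) by ring]
    exact cnt_eval _ hQ hs0 hs1 (Int.emod_nonneg _ (ne_of_gt hQ)) (Int.emod_lt_of_pos _ hQ)
  have step2 : ((((Box ×ˢ Box).filter (fun p => (q : ℤ) ∣ p.1 - p.2)).card : ℤ))
      = ∑ u ∈ Box, ((m₀ + (if (u + ℓ) % q < s₀ then 1 else 0) : ℤ)) := by
    rw [step1]
    push_cast
    exact Finset.sum_congr rfl inner
  rw [step2, Finset.sum_add_distrib, Finset.sum_const, Finset.sum_boole, nsmul_eq_mul]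
  rw [count_small_residues ℓ hQ hs0 hs1 hm0 hdecomp]
  have hBc : (Box.card : ℤ) = 2 * ℓ + 1 := by
    rw [hBox, Int.card_Icc]
    omega
  rw [hBc]
  linear_combination m₀ * hdecomp - hK

lemma C_card_eq {q ℓ : ℕ} (hq : 1 ≤ q) {m₀ s₀ c : ℤ}
    (hdecomp : (2 * ℓ + 1 : ℤ) = (q : ℤ) * m₀ + s₀) (hs0 : 0 ≤ s₀) (hs1 : s₀ ≤ (q : ℤ) - 1)
    (hc : (Odd q ∧ Odd m₀ ∧ c = m₀) ∨ (Odd q ∧ Even m₀ ∧ c = m₀ + 1) ∨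
          (Even q ∧ c = 2 * m₀ + 1)) :
    ((((Finset.Icc (-(ℓ : ℤ)) ℓ).filter (fun u => (q : ℤ) ∣ 2 * u)).card : ℤ)) = c := by
  have hQ : 0 < (q : ℤ) := by exact_mod_cast hq
  rcases hc with ⟨hqo, hmo, hcv⟩ | ⟨hqo, hme, hcv⟩ | ⟨hqe, hcv⟩
  · -- q odd, m₀ odd
    obtain ⟨p, hp⟩ := hqo
    obtain ⟨k, hk⟩ := hmo
    have hq' : (q : ℤ) = 2 * p + 1 := by exact_mod_cast hp
    have hcop : IsCoprime (q : ℤ) 2 := by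
      rw [Int.isCoprime_iff_gcd_eq_one]
      have : Nat.Coprime 2 q := Nat.coprime_two_left.mpr ⟨p, hp⟩
      simpa [Int.gcd] using this.symm
    have hfil : (Finset.Icc (-(ℓ : ℤ)) ℓ).filter (fun u => (q : ℤ) ∣ 2 * u)
        = (Finset.Icc (-(ℓ : ℤ)) ℓ).filter (fun u => (q : ℤ) ∣ u) := by
      apply Finset.filter_congr
      intro u _
      constructor
      · intro h
        exact hcop.dvd_of_dvd_mul_left h
      · exact fun h => h.mul_left 2
    rw [hfil, card_multiples hQ]
    have hs : s₀ = 2 * ((ℓ : ℤ) - (2 * p * k + p + k)) := by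
      linear_combination -hdecomp - m₀ * hq' - (2 * (p : ℤ) + 1) * hk
    set e : ℤ := (ℓ : ℤ) - (2 * p * k + p + k) with he
    have heq2 : 2 * (ℓ : ℤ) = 2 * ((q : ℤ) * k + (p + e)) := by
      linear_combination hdecomp + (q : ℤ) * hk + hs + hq'
    have heq3 : (ℓ : ℤ) = (q : ℤ) * k + (p + e) := by linarith
    rw [heq3, ediv_of _ _ hQ (by omega) (by omega)]
    omega
  · -- q odd, m₀ even
    obtain ⟨p, hp⟩ := hqo
    obtain ⟨k, hk'⟩ := hme
    have hk : m₀ = 2 * k := by omega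
    have hq' : (q : ℤ) = 2 * p + 1 := by exact_mod_cast hp
    have hcop : IsCoprime (q : ℤ) 2 := by
      rw [Int.isCoprime_iff_gcd_eq_one]
      have : Nat.Coprime 2 q := Nat.coprime_two_left.mpr ⟨p, hp⟩
      simpa [Int.gcd] using this.symm
    have hfil : (Finset.Icc (-(ℓ : ℤ)) ℓ).filter (fun u => (q : ℤ) ∣ 2 * u)
        = (Finset.Icc (-(ℓ : ℤ)) ℓ).filter (fun u => (q : ℤ) ∣ u) := by
      apply Finset.filter_congr
      intro u _
      constructor
      · intro h
        exact hcop.dvd_of_dvd_mul_left h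
      · exact fun h => h.mul_left 2
    rw [hfil, card_multiples hQ]
    have hs : s₀ = 2 * ((ℓ : ℤ) - (2 * p * k + k)) + 1 := by
      linear_combination -hdecomp - m₀ * hq' - (2 * (p : ℤ) + 1) * hk
    set e : ℤ := (ℓ : ℤ) - (2 * p * k + k) with he
    have heq2 : 2 * (ℓ : ℤ) = 2 * ((q : ℤ) * k + e) := by
      linear_combination hdecomp + (q : ℤ) * hk + hs
    have heq3 : (ℓ : ℤ) = (q : ℤ) * k + e := by linarith
    rw [heq3, ediv_of _ _ hQ (by omega) (by omega)]
    omega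
  · -- q even
    obtain ⟨p, hp'⟩ := hqe
    have hp : q = 2 * p := by omega
    have hp0 : 0 < (p : ℤ) := by
      have : 1 ≤ p := by omega
      exact_mod_cast this
    have hq' : (q : ℤ) = 2 * p := by exact_mod_cast hp
    have hfil : (Finset.Icc (-(ℓ : ℤ)) ℓ).filter (fun u => (q : ℤ) ∣ 2 * u)
        = (Finset.Icc (-(ℓ : ℤ)) ℓ).filter (fun u => (p : ℤ) ∣ u) := by
      apply Finset.filter_congr
      intro u _
      rw [hq']
      rw [show (2 * (p : ℤ)) = 2 * p by ring]
      exact mul_dvd_mul_iff_left (two_ne_zero)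
    rw [hfil, card_multiples hp0]
    have hs : s₀ = 2 * ((ℓ : ℤ) - (p : ℤ) * m₀) + 1 := by
      linear_combination -hdecomp - m₀ * hq'
    set e : ℤ := (ℓ : ℤ) - (p : ℤ) * m₀ with he
    have heq2 : 2 * (ℓ : ℤ) = 2 * ((p : ℤ) * m₀ + e) := by linarith
    have heq3 : (ℓ : ℤ) = (p : ℤ) * m₀ + e := by linarith
    rw [heq3, ediv_of _ _ hp0 (by omega) (by omega)]
    omega

def Pset (q ℓ : ℕ) : Finset (ℤ × ℤ) :=
  ((Finset.Icc (-(ℓ : ℤ)) ℓ) ×ˢ (Finset.Icc (-(ℓ : ℤ)) ℓ)).filter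
    (fun p => ((q : ℤ) ∣ p.1 - p.2) ∧ 0 < p.1 + p.2 ∧ p.1 ≠ p.2)

lemma mem_Pset {q ℓ : ℕ} {p : ℤ × ℤ} : p ∈ Pset q ℓ ↔
    (-(ℓ : ℤ) ≤ p.1 ∧ p.1 ≤ ℓ) ∧ (-(ℓ : ℤ) ≤ p.2 ∧ p.2 ≤ ℓ) ∧
    ((q : ℤ) ∣ p.1 - p.2) ∧ 0 < p.1 + p.2 ∧ p.1 ≠ p.2 := by
  simp only [Pset, Finset.mem_filter, Finset.mem_product, Finset.mem_Icc]
  tauto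

def BoxZ (ℓ : ℕ) : Finset ℤ := Finset.Icc (-(ℓ : ℤ)) ℓ

def TpF (q ℓ : ℕ) : Finset (ℤ × ℤ) :=
  (BoxZ ℓ ×ˢ BoxZ ℓ).filter (fun p => ((q : ℤ) ∣ p.1 - p.2) ∧ 0 < p.1 + p.2)

def TnF (q ℓ : ℕ) : Finset (ℤ × ℤ) :=
  (BoxZ ℓ ×ˢ BoxZ ℓ).filter (fun p => ((q : ℤ) ∣ p.1 - p.2) ∧ p.1 + p.2 < 0)

def TzF (q ℓ : ℕ) : Finset (ℤ × ℤ) :=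
  (BoxZ ℓ ×ˢ BoxZ ℓ).filter (fun p => ((q : ℤ) ∣ p.1 - p.2) ∧ p.1 + p.2 = 0)

def DiagF (q ℓ : ℕ) : Finset (ℤ × ℤ) :=
  (BoxZ ℓ ×ˢ BoxZ ℓ).filter (fun p => (((q : ℤ) ∣ p.1 - p.2) ∧ 0 < p.1 + p.2) ∧ p.1 = p.2)

lemma T_split (q ℓ : ℕ) :
    ((BoxZ ℓ ×ˢ BoxZ ℓ).filter (fun p => (q : ℤ) ∣ p.1 - p.2)).card
      = (TpF q ℓ).card + (TzF q ℓ).card + (TnF q ℓ).card := by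
  classical
  rw [TpF, TzF, TnF, Finset.card_filter, Finset.card_filter, Finset.card_filter,
    Finset.card_filter, ← Finset.sum_add_distrib, ← Finset.sum_add_distrib]
  apply Finset.sum_congr rfl
  intro p _
  by_cases hd : (q : ℤ) ∣ p.1 - p.2
  · simp only [hd, true_and]
    split_ifs <;> omega
  · simp [hd]

lemma Tp_split (q ℓ : ℕ) : (TpF q ℓ).card = (Pset q ℓ).card + (DiagF q ℓ).card := by
  classical
  rw [TpF, Pset, DiagF, BoxZ, Finset.card_filter, Finset.card_filter, Finset.card_filter,
    ← Finset.sum_add_distrib]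
  apply Finset.sum_congr rfl
  intro p _
  by_cases hd : (q : ℤ) ∣ p.1 - p.2
  · simp only [hd, true_and]
    split_ifs <;> omega
  · simp [hd]

lemma Tn_card (q ℓ : ℕ) : (TnF q ℓ).card = (TpF q ℓ).card := by
  classical
  refine Finset.card_bij' (fun p _ => (-p.2, -p.1)) (fun p _ => (-p.2, -p.1))
    ?hi ?hj ?li ?ri
  case hi =>
    intro p hp
    simp only [TnF, BoxZ, Finset.mem_filter, Finset.mem_product, Finset.mem_Icc] at hp
    simp only [TpF, BoxZ, Finset.mem_filter, Finset.mem_product, Finset.mem_Icc]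
    obtain ⟨⟨⟨ha1, ha2⟩, hb1, hb2⟩, hd, hs⟩ := hp
    obtain ⟨t, htd⟩ := hd
    exact ⟨⟨⟨by omega, by omega⟩, by omega, by omega⟩, ⟨t, by omega⟩, by omega⟩
  case hj =>
    intro p hp
    simp only [TpF, BoxZ, Finset.mem_filter, Finset.mem_product, Finset.mem_Icc] at hp
    simp only [TnF, BoxZ, Finset.mem_filter, Finset.mem_product, Finset.mem_Icc]
    obtain ⟨⟨⟨ha1, ha2⟩, hb1, hb2⟩, hd, hs⟩ := hp
    obtain ⟨t, htd⟩ := hd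
    exact ⟨⟨⟨by omega, by omega⟩, by omega, by omega⟩, ⟨t, by omega⟩, by omega⟩
  case li =>
    intro p _
    simp
  case ri =>
    intro p _
    simp

lemma Tz_card (q ℓ : ℕ) :
    (TzF q ℓ).card = ((BoxZ ℓ).filter (fun u => (q : ℤ) ∣ 2 * u)).card := by
  classical
  refine Finset.card_bij' (fun p _ => p.1) (fun u _ => (u, -u)) ?hi ?hj ?li ?ri
  case hi =>
    intro p hp
    simp only [TzF, BoxZ, Finset.mem_filter, Finset.mem_product, Finset.mem_Icc] at hp
    simp only [BoxZ, Finset.mem_filter, Finset.mem_Icc]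
    obtain ⟨⟨⟨ha1, ha2⟩, hb1, hb2⟩, hd, hs⟩ := hp
    obtain ⟨t, htd⟩ := hd
    exact ⟨⟨by omega, by omega⟩, ⟨t, by omega⟩⟩
  case hj =>
    intro u hu
    simp only [BoxZ, Finset.mem_filter, Finset.mem_Icc] at hu
    simp only [TzF, BoxZ, Finset.mem_filter, Finset.mem_product, Finset.mem_Icc]
    obtain ⟨⟨h1', h2'⟩, t, htd⟩ := hu
    exact ⟨⟨⟨by omega, by omega⟩, by omega, by omega⟩, ⟨t, by omega⟩, by omega⟩
  case li =>
    intro p hp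
    simp only [TzF, Finset.mem_filter] at hp
    obtain ⟨-, -, hs⟩ := hp
    have hpe : p = (p.1, p.2) := rfl
    conv_rhs => rw [hpe]
    simp only [Prod.mk.injEq]
    exact ⟨trivial, by omega⟩
  case ri =>
    intro u _
    rfl

lemma Diag_card (q ℓ : ℕ) : (DiagF q ℓ).card = ℓ := by
  classical
  have key : (DiagF q ℓ).card = (Finset.Icc (1 : ℤ) ℓ).card := by
    refine Finset.card_bij' (fun p _ => p.1) (fun u _ => (u, u)) ?hi ?hj ?li ?ri
    case hi =>
      intro p hp
      simp only [DiagF, BoxZ, Finset.mem_filter, Finset.mem_product, Finset.mem_Icc] at hp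
      simp only [Finset.mem_Icc]
      obtain ⟨⟨⟨ha1, ha2⟩, hb1, hb2⟩, ⟨hd, hs⟩, hee⟩ := hp
      omega
    case hj =>
      intro u hu
      simp only [Finset.mem_Icc] at hu
      simp only [DiagF, BoxZ, Finset.mem_filter, Finset.mem_product, Finset.mem_Icc]
      exact ⟨⟨⟨by omega, by omega⟩, by omega, by omega⟩, ⟨⟨0, by ring⟩, by omega⟩, trivial⟩
    case li =>
      intro p hp
      simp only [DiagF, Finset.mem_filter] at hp
      have hee := hp.2.2
      have hpe : p = (p.1, p.2) := rfl
      conv_rhs => rw [hpe]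
      simp only [Prod.mk.injEq]
      exact ⟨trivial, hee⟩
    case ri =>
      intro u _
      rfl
  rw [key, Int.card_Icc]
  omega

lemma Pset_card_eq {q ℓ : ℕ} (hq : 1 ≤ q) {m₀ s₀ K c : ℤ}
    (hdecomp : (2 * ℓ + 1 : ℤ) = (q : ℤ) * m₀ + s₀) (hs0 : 0 ≤ s₀) (hs1 : s₀ ≤ (q : ℤ) - 1)
    (hK : K = m₀ ^ 2 * ((q : ℤ) - s₀) + (m₀ + 1) ^ 2 * s₀)
    (hc : (Odd q ∧ Odd m₀ ∧ c = m₀) ∨ (Odd q ∧ Even m₀ ∧ c = m₀ + 1) ∨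
          (Even q ∧ c = 2 * m₀ + 1)) :
    (2 : ℤ) * ((Pset q ℓ).card : ℤ) = K - c - 2 * (ℓ : ℤ) := by
  have hTK : ((((BoxZ ℓ) ×ˢ (BoxZ ℓ)).filter
      (fun p => (q : ℤ) ∣ p.1 - p.2)).card : ℤ) = K := by
    rw [BoxZ]
    exact T_card_eq hq hdecomp hs0 hs1 hK
  have hCc : ((((BoxZ ℓ).filter (fun u => (q : ℤ) ∣ 2 * u)).card : ℤ)) = c := by
    rw [BoxZ]
    exact C_card_eq hq hdecomp hs0 hs1 hc
  have h1 := T_split q ℓ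
  have h2 := Tp_split q ℓ
  have h3 := Tn_card q ℓ
  have h4 := Tz_card q ℓ
  have h5 := Diag_card q ℓ
  omega

lemma injOn_phi (ℓ q : ℕ) :
    Set.InjOn (fun p : ℤ × ℤ => Evec ℓ p.1 - Evec ℓ p.2) ↑(Pset q ℓ) := by
  intro p hp p' hp' heq
  rw [Finset.mem_coe, mem_Pset] at hp hp'
  obtain ⟨⟨ha1, ha2⟩, ⟨hb1, hb2⟩, -, hs, hne⟩ := hp
  obtain ⟨⟨ha1', ha2'⟩, ⟨hb1', hb2'⟩, -, hs', hne'⟩ := hp'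
  have H : ∀ t : ℤ, 1 ≤ t → t ≤ (ℓ : ℤ) →
      chi p.1 t + chi (-p.2) t = chi p'.1 t + chi (-p'.2) t := by
    intro t h1 h2
    have hidx : ℓ - t.toNat < ℓ := by omega
    have hev := congrFun heq ⟨ℓ - t.toNat, hidx⟩
    simp only [Pi.sub_apply, Evec] at hev
    have hcast : ((ℓ : ℤ) - (((⟨ℓ - t.toNat, hidx⟩ : Fin ℓ) : ℕ) : ℤ)) = t := by
      show ((ℓ : ℤ) - ((ℓ - t.toNat : ℕ) : ℤ)) = t
      omega
    rw [hcast] at hev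
    have hz : chi p.1 t - chi p.2 t = chi p'.1 t - chi p'.2 t := by exact_mod_cast hev
    rw [chi_neg h1, chi_neg h1]
    omega
  have hrec := chi_recover (L := (ℓ : ℤ)) (by omega : -p.2 < p.1) (by omega) (by omega)
    (by omega) ha1 ha2 (by omega) (by omega) ha1' ha2' (by omega) (by omega) H
  exact Prod.ext hrec.1 (by omega)

lemma roots_eq {ℓ q : ℕ} (hℓ : 2 ≤ ℓ)
    (ht : (Fin ℓ → ℚ) →ₗ[ℚ] ℚ) (hht : ∀ i : Fin ℓ, ht (simpleB ℓ i) = 1) :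
    {α | α ∈ rootsB ℓ ∧ ∃ k : ℤ, ht α = (q : ℚ) * k}
      = (fun p : ℤ × ℤ => Evec ℓ p.1 - Evec ℓ p.2) '' ↑(Pset q ℓ) := by
  have ES : ∀ w : ℤ, 1 ≤ w → w ≤ (ℓ : ℤ) →
      ∃ i : Fin ℓ, Evec ℓ w = stdVec ℓ i ∧ ((i : ℕ) : ℤ) = (ℓ : ℤ) - w := by
    intro w h1 h2
    have hidx : ℓ - w.toNat < ℓ := by omega
    refine ⟨⟨ℓ - w.toNat, hidx⟩, ?_, ?_⟩
    · have hh : ((ℓ : ℤ) - (((⟨ℓ - w.toNat, hidx⟩ : Fin ℓ) : ℕ) : ℤ)) = w := by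
        show ((ℓ : ℤ) - ((ℓ - w.toNat : ℕ) : ℤ)) = w
        omega
      have h3 := Evec_eq_std (ℓ := ℓ) ⟨ℓ - w.toNat, hidx⟩
      rw [hh] at h3
      exact h3
    · show ((ℓ - w.toNat : ℕ) : ℤ) = (ℓ : ℤ) - w
      omega
  ext α
  simp only [Set.mem_setOf_eq, Set.mem_image, Finset.mem_coe]
  constructor
  · rintro ⟨hroot, k, hk⟩
    rcases hroot with ⟨i, j, hij, hform⟩ | ⟨i, hform⟩
    · have hii := i.isLt
      have hjj := j.isLt
      have hijn : (i : ℕ) < (j : ℕ) := hij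
      rcases hform with h | h | h | h
      · -- α = eᵢ + eⱼ
        have hhtα : ht α = ((((ℓ : ℤ) - i) + ((ℓ : ℤ) - j) : ℤ) : ℚ) := by
          rw [h, map_add, ht_std ht hht, ht_std ht hht]
          push_cast
          ring
        have hzz : ((ℓ : ℤ) - i) + ((ℓ : ℤ) - j) = (q : ℤ) * k := by
          exact_mod_cast hhtα.symm.trans hk
        refine ⟨((ℓ : ℤ) - (i : ℕ), -((ℓ : ℤ) - (j : ℕ))), ?_, ?_⟩
        · rw [mem_Pset]
          exact ⟨⟨by omega, by omega⟩, ⟨by omega, by omega⟩,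
            ⟨k, show ((ℓ : ℤ) - (i : ℕ)) - (-((ℓ : ℤ) - (j : ℕ))) = (q : ℤ) * k by linarith⟩,
            by omega, by omega⟩
        · show Evec ℓ ((ℓ : ℤ) - (i : ℕ)) - Evec ℓ (-((ℓ : ℤ) - (j : ℕ))) = α
          rw [Evec_neg, Evec_eq_std, Evec_eq_std, h]
          abel
      · -- α = eᵢ - eⱼ
        have hhtα : ht α = ((((ℓ : ℤ) - i) - ((ℓ : ℤ) - j) : ℤ) : ℚ) := by
          rw [h, map_sub, ht_std ht hht, ht_std ht hht]
          push_cast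
          ring
        have hzz : ((ℓ : ℤ) - i) - ((ℓ : ℤ) - j) = (q : ℤ) * k := by
          exact_mod_cast hhtα.symm.trans hk
        refine ⟨((ℓ : ℤ) - (i : ℕ), (ℓ : ℤ) - (j : ℕ)), ?_, ?_⟩
        · rw [mem_Pset]
          exact ⟨⟨by omega, by omega⟩, ⟨by omega, by omega⟩,
            ⟨k, show ((ℓ : ℤ) - (i : ℕ)) - ((ℓ : ℤ) - (j : ℕ)) = (q : ℤ) * k by linarith⟩,
            by omega, by omega⟩
        · show Evec ℓ ((ℓ : ℤ) - (i : ℕ)) - Evec ℓ ((ℓ : ℤ) - (j : ℕ)) = α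
          rw [Evec_eq_std, Evec_eq_std, h]
      · -- α = -eᵢ + eⱼ
        have hhtα : ht α = (((-((ℓ : ℤ) - i)) + ((ℓ : ℤ) - j) : ℤ) : ℚ) := by
          rw [h, map_add, map_neg, ht_std ht hht, ht_std ht hht]
          push_cast
          ring
        have hzz : (-((ℓ : ℤ) - i)) + ((ℓ : ℤ) - j) = (q : ℤ) * k := by
          exact_mod_cast hhtα.symm.trans hk
        refine ⟨((ℓ : ℤ) - (j : ℕ), (ℓ : ℤ) - (i : ℕ)), ?_, ?_⟩
        · rw [mem_Pset]
          exact ⟨⟨by omega, by omega⟩, ⟨by omega, by omega⟩,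
            ⟨k, show ((ℓ : ℤ) - (j : ℕ)) - ((ℓ : ℤ) - (i : ℕ)) = (q : ℤ) * k by linarith⟩,
            by omega, by omega⟩
        · show Evec ℓ ((ℓ : ℤ) - (j : ℕ)) - Evec ℓ ((ℓ : ℤ) - (i : ℕ)) = α
          rw [Evec_eq_std, Evec_eq_std, h]
          abel
      · -- α = -eᵢ - eⱼ
        have hhtα : ht α = (((-((ℓ : ℤ) - i)) - ((ℓ : ℤ) - j) : ℤ) : ℚ) := by
          rw [h, map_sub, map_neg, ht_std ht hht, ht_std ht hht]
          push_cast
          ring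
        have hzz : (-((ℓ : ℤ) - i)) - ((ℓ : ℤ) - j) = (q : ℤ) * k := by
          exact_mod_cast hhtα.symm.trans hk
        refine ⟨(-((ℓ : ℤ) - (j : ℕ)), (ℓ : ℤ) - (i : ℕ)), ?_, ?_⟩
        · rw [mem_Pset]
          exact ⟨⟨by omega, by omega⟩, ⟨by omega, by omega⟩,
            ⟨k, show (-((ℓ : ℤ) - (j : ℕ))) - ((ℓ : ℤ) - (i : ℕ)) = (q : ℤ) * k by linarith⟩,
            by omega, by omega⟩
        · show Evec ℓ (-((ℓ : ℤ) - (j : ℕ))) - Evec ℓ ((ℓ : ℤ) - (i : ℕ)) = α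
          rw [Evec_neg, Evec_eq_std, Evec_eq_std, h]
          abel
    · have hii := i.isLt
      rcases hform with h | h
      · -- α = eᵢ
        have hhtα : ht α = ((((ℓ : ℤ) - i) : ℤ) : ℚ) := by
          rw [h, ht_std ht hht]
          push_cast
          ring
        have hzz : ((ℓ : ℤ) - i) = (q : ℤ) * k := by
          exact_mod_cast hhtα.symm.trans hk
        refine ⟨((ℓ : ℤ) - (i : ℕ), 0), ?_, ?_⟩
        · rw [mem_Pset]
          exact ⟨⟨by omega, by omega⟩, ⟨by omega, by omega⟩,
            ⟨k, show ((ℓ : ℤ) - (i : ℕ)) - 0 = (q : ℤ) * k by linarith⟩,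
            by omega, by omega⟩
        · show Evec ℓ ((ℓ : ℤ) - (i : ℕ)) - Evec ℓ 0 = α
          rw [Evec_zero, Evec_eq_std, h]
          abel
      · -- α = -eᵢ
        have hhtα : ht α = (((-((ℓ : ℤ) - i)) : ℤ) : ℚ) := by
          rw [h, map_neg, ht_std ht hht]
          push_cast
          ring
        have hzz : (-((ℓ : ℤ) - i)) = (q : ℤ) * k := by
          exact_mod_cast hhtα.symm.trans hk
        refine ⟨(0, (ℓ : ℤ) - (i : ℕ)), ?_, ?_⟩
        · rw [mem_Pset]
          exact ⟨⟨by omega, by omega⟩, ⟨by omega, by omega⟩,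
            ⟨k, show (0 : ℤ) - ((ℓ : ℤ) - (i : ℕ)) = (q : ℤ) * k by linarith⟩,
            by omega, by omega⟩
        · show Evec ℓ 0 - Evec ℓ ((ℓ : ℤ) - (i : ℕ)) = α
          rw [Evec_zero, Evec_eq_std, h]
          abel
  · rintro ⟨⟨u, v⟩, hmem, rfl⟩
    rw [mem_Pset] at hmem
    obtain ⟨⟨ha1, ha2⟩, ⟨hb1, hb2⟩, hd, hs, hne⟩ := hmem
    obtain ⟨k, hk⟩ := exists_eq_mul_right_of_dvd hd
    constructor
    · -- membership in rootsB
      show (Evec ℓ u - Evec ℓ v) ∈ rootsB ℓ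
      rcases lt_trichotomy 0 u with hu | hu | hu
      · rcases lt_trichotomy 0 v with hv | hv | hv
        · -- u ≥ 1, v ≥ 1
          obtain ⟨i, hEi, hvi⟩ := ES u (by omega) (by omega)
          obtain ⟨j, hEj, hvj⟩ := ES v (by omega) (by omega)
          rcases lt_trichotomy u v with huv | huv | huv
          · exact Or.inl ⟨j, i, by rw [Fin.lt_def]; omega,
              Or.inr (Or.inr (Or.inl (by rw [hEi, hEj]; abel)))⟩
          · omega
          · exact Or.inl ⟨i, j, by rw [Fin.lt_def]; omega,
              Or.inr (Or.inl (by rw [hEi, hEj]))⟩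
        · -- v = 0
          obtain ⟨i, hEi, hvi⟩ := ES u (by omega) (by omega)
          refine Or.inr ⟨i, Or.inl ?_⟩
          rw [← hv, Evec_zero, hEi]
          abel
        · -- u ≥ 1, v ≤ -1
          obtain ⟨i, hEi, hvi⟩ := ES u (by omega) (by omega)
          obtain ⟨j, hEj, hvj⟩ := ES (-v) (by omega) (by omega)
          have hEv : Evec ℓ v = - Evec ℓ (-v) := by
            conv_lhs => rw [show v = -(-v) by ring]
            rw [Evec_neg]
          rcases lt_trichotomy u (-v) with huv | huv | huv
          · exact Or.inl ⟨j, i, by rw [Fin.lt_def]; omega,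
              Or.inl (by rw [hEv, hEj, hEi]; abel)⟩
          · omega
          · exact Or.inl ⟨i, j, by rw [Fin.lt_def]; omega,
              Or.inl (by rw [hEv, hEj, hEi]; abel)⟩
      ·
        obtain ⟨j, hEj, hvj⟩ := ES v (by omega) (by omega)
        refine Or.inr ⟨j, Or.inr ?_⟩
        rw [← hu, Evec_zero, hEj]
        abel
      · -- u ≤ -1, so v ≥ 1
        obtain ⟨i, hEi, hvi⟩ := ES (-u) (by omega) (by omega)
        obtain ⟨j, hEj, hvj⟩ := ES v (by omega) (by omega)
        have hEu : Evec ℓ u = - Evec ℓ (-u) := by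
          conv_lhs => rw [show u = -(-u) by ring]
          rw [Evec_neg]
        exact Or.inl ⟨j, i, by rw [Fin.lt_def]; omega,
          Or.inr (Or.inr (Or.inr (by rw [hEu, hEi, hEj]; abel)))⟩
    · -- height divisibility
      refine ⟨k, ?_⟩
      rw [map_sub, ht_Evec ht hht (by omega) (by omega), ht_Evec ht hht (by omega) (by omega)]
      have := congrArg (fun z : ℤ => (z : ℚ)) hk
      push_cast at this
      linarith

/-- Let `ℓ ≥ 2` and `q ≥ 1` be integers, set `n = 2ℓ+1`, and write `n = q·m₀ + s₀`
with `m₀, s₀` integers, `0 ≤ s₀ ≤ q−1`.  Set `K = m₀²(q−s₀) + (m₀+1)²·s₀` and set `c = m₀` if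
`q` and `m₀` are both odd, `c = m₀+1` if `q` is odd and `m₀` is even, and `c = 2m₀+1` if `q` is
even.  Then the number of roots `α ∈ Δ(Bₗ)` with `q` dividing `ht(α)` equals `(K − c)/2 − ℓ`.
The height is computed against any linear functional taking the value `1` on each simple root
of `Bₗ`. -/
theorem statement3 (ℓ q : ℕ) (hℓ : 2 ≤ ℓ) (hq : 1 ≤ q)
    (m₀ s₀ K c : ℤ)
    (hdecomp : (2 * ℓ + 1 : ℤ) = (q : ℤ) * m₀ + s₀) (hs0 : 0 ≤ s₀) (hs1 : s₀ ≤ (q : ℤ) - 1)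
    (hK : K = m₀ ^ 2 * ((q : ℤ) - s₀) + (m₀ + 1) ^ 2 * s₀)
    (hc : (Odd q ∧ Odd m₀ ∧ c = m₀) ∨ (Odd q ∧ Even m₀ ∧ c = m₀ + 1) ∨
          (Even q ∧ c = 2 * m₀ + 1))
    (ht : (Fin ℓ → ℚ) →ₗ[ℚ] ℚ) (hht : ∀ i : Fin ℓ, ht (simpleB ℓ i) = 1) :
    ({α | α ∈ rootsB ℓ ∧ ∃ k : ℤ, ht α = (q : ℚ) * k}.ncard : ℚ) =
      ((K : ℚ) - (c : ℚ)) / 2 - (ℓ : ℚ) := by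
  have hset := roots_eq (q := q) hℓ ht hht
  rw [hset, Set.ncard_image_of_injOn (injOn_phi ℓ q), Set.ncard_coe_finset]
  have h2P := Pset_card_eq (ℓ := ℓ) hq hdecomp hs0 hs1 hK hc
  have hQ := congrArg (fun z : ℤ => (z : ℚ)) h2P
  push_cast at hQ
  linarith
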